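/- arXiv:1506.01935 — 2 statements merged into one kernel-verified Lean document; each statement's English description precedes it below -/
import Mathlib

section
/- Let n ≥ 1 and let q : ℝ × ℝⁿ → ℂ be integrable on ℝ × ℝⁿ. Then for every ω ∈ ℝⁿ and every ξ ∈ ℝⁿ, the Fourier transform in y of the light-ray transform equals the space-time Fourier transform of q evaluated at the point (⟨ω,ξ⟩, ξ): ∫_{ℝⁿ} ( ∫_ℝ q(t, y − tω) dt ) e^{−2πi⟨y,ξ⟩} dy = ∫_{ℝ×ℝⁿ} q(t,x) e^{−2πi( t⟨ω,ξ⟩ + ⟨x,ξ⟩ )} dt dx = q̂(⟨ω,ξ⟩, ξ). -/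
open MeasureTheory Real

theorem fourier_slice_lightray
    (n : ℕ) (hn : 1 ≤ n)
    (q : ℝ × EuclideanSpace ℝ (Fin n) → ℂ)
    (hq : Integrable q)
    (ω ξ : EuclideanSpace ℝ (Fin n)) :
    ∫ y : EuclideanSpace ℝ (Fin n),
        (∫ t : ℝ, q (t, y - t • ω)) *
          Complex.exp (-2 * (Real.pi : ℂ) * Complex.I * ((inner ℝ y ξ : ℝ) : ℂ))
      = ∫ p : ℝ × EuclideanSpace ℝ (Fin n),
          q p * Complex.exp (-2 * (Real.pi : ℂ) * Complex.I *
            (((p.1 : ℂ) * ((inner ℝ ω ξ : ℝ) : ℂ)) + ((inner ℝ p.2 ξ : ℝ) : ℂ))) := by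
  have hnorm : ∀ r : ℝ, ‖Complex.exp (-2 * (Real.pi : ℂ) * Complex.I * (r : ℂ))‖ = 1 := by
    intro r
    have h : (-2 * (Real.pi : ℂ) * Complex.I * (r : ℂ))
        = ((-2 * Real.pi * r : ℝ) : ℂ) * Complex.I := by push_cast; ring
    rw [h]
    exact Complex.norm_exp_ofReal_mul_I _
  have hnorm2 : ∀ z : ℂ, z.re = 0 → ‖Complex.exp z‖ = 1 := by
    intro z hz
    simp [Complex.norm_exp, hz]
  have hqm := hq.aestronglyMeasurable
  -- measure preserving shear
  have hswap : MeasurePreserving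
      (Prod.swap : EuclideanSpace ℝ (Fin n) × ℝ → ℝ × EuclideanSpace ℝ (Fin n))
      volume volume := Measure.measurePreserving_swap
  have hshear : MeasurePreserving
      (fun p : ℝ × EuclideanSpace ℝ (Fin n) => (p.1, p.2 - p.1 • ω)) volume volume := by
    exact (MeasurePreserving.id (volume : Measure ℝ)).skew_product
      (g := fun t x => x - t • ω)
      (by fun_prop)
      (Filter.Eventually.of_forall fun t =>
        (measurePreserving_sub_right volume (t • ω)).map_eq)
  have hΦ : MeasurePreserving
      (fun p : EuclideanSpace ℝ (Fin n) × ℝ => ((p.2 : ℝ), p.1 - p.2 • ω))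
      volume volume := hshear.comp hswap
  -- integrability of q composed with the shear
  have hqΦ : Integrable
      (fun p : EuclideanSpace ℝ (Fin n) × ℝ => q (p.2, p.1 - p.2 • ω)) := by
    exact (hΦ.integrable_comp hqm).mpr hq
  -- integrand on the left, uncurried
  have hG : Integrable
      (Function.uncurry fun (y : EuclideanSpace ℝ (Fin n)) (t : ℝ) =>
        q (t, y - t • ω) *
          Complex.exp (-2 * (Real.pi : ℂ) * Complex.I * ((inner ℝ y ξ : ℝ) : ℂ))) := by
    have h1 : Integrable
        (fun p : EuclideanSpace ℝ (Fin n) × ℝ =>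
          Complex.exp (-2 * (Real.pi : ℂ) * Complex.I * ((inner ℝ p.1 ξ : ℝ) : ℂ)) *
            q (p.2, p.1 - p.2 • ω)) := by
      refine hqΦ.bdd_mul (c := 1) ?_ (Filter.Eventually.of_forall fun p => le_of_eq (hnorm _))
      exact (Complex.continuous_exp.comp (continuous_const.mul
        (Complex.continuous_ofReal.comp
          (continuous_fst.inner continuous_const)))).aestronglyMeasurable
    exact h1.congr (Filter.Eventually.of_forall fun p => mul_comm _ _)
  -- integrand on the right
  have hF : Integrable
      (fun p : ℝ × EuclideanSpace ℝ (Fin n) =>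
        q p * Complex.exp (-2 * (Real.pi : ℂ) * Complex.I *
          (((p.1 : ℂ) * ((inner ℝ ω ξ : ℝ) : ℂ)) + ((inner ℝ p.2 ξ : ℝ) : ℂ)))) := by
    have h1 : Integrable
        (fun p : ℝ × EuclideanSpace ℝ (Fin n) =>
          Complex.exp (-2 * (Real.pi : ℂ) * Complex.I *
            (((p.1 : ℂ) * ((inner ℝ ω ξ : ℝ) : ℂ)) + ((inner ℝ p.2 ξ : ℝ) : ℂ))) * q p) := by
      refine hq.bdd_mul (c := 1) ?_ (Filter.Eventually.of_forall fun p => ?_)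
      · refine (Complex.continuous_exp.comp (continuous_const.mul ?_)).aestronglyMeasurable
        exact ((Complex.continuous_ofReal.comp continuous_fst).mul continuous_const).add
          (Complex.continuous_ofReal.comp (continuous_snd.inner continuous_const))
      · refine le_of_eq (hnorm2 _ ?_)
        simp [Complex.ext_iff]
    exact h1.congr (Filter.Eventually.of_forall fun p => mul_comm _ _)
  calc
    ∫ y : EuclideanSpace ℝ (Fin n),
        (∫ t : ℝ, q (t, y - t • ω)) *
          Complex.exp (-2 * (Real.pi : ℂ) * Complex.I * ((inner ℝ y ξ : ℝ) : ℂ))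
      = ∫ y : EuclideanSpace ℝ (Fin n), ∫ t : ℝ,
          q (t, y - t • ω) *
            Complex.exp (-2 * (Real.pi : ℂ) * Complex.I * ((inner ℝ y ξ : ℝ) : ℂ)) := by
        simp_rw [integral_mul_const]
    _ = ∫ t : ℝ, ∫ y : EuclideanSpace ℝ (Fin n),
          q (t, y - t • ω) *
            Complex.exp (-2 * (Real.pi : ℂ) * Complex.I * ((inner ℝ y ξ : ℝ) : ℂ)) :=
        integral_integral_swap hG
    _ = ∫ t : ℝ, ∫ x : EuclideanSpace ℝ (Fin n),
          q (t, x) *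
            Complex.exp (-2 * (Real.pi : ℂ) * Complex.I *
              (((t : ℂ) * ((inner ℝ ω ξ : ℝ) : ℂ)) + ((inner ℝ x ξ : ℝ) : ℂ))) := by
        refine integral_congr_ae (Filter.Eventually.of_forall fun t => ?_)
        dsimp only
        have := integral_sub_right_eq_self (μ := volume)
          (fun x : EuclideanSpace ℝ (Fin n) =>
            q (t, x) *
              Complex.exp (-2 * (Real.pi : ℂ) * Complex.I *
                (((t : ℂ) * ((inner ℝ ω ξ : ℝ) : ℂ)) + ((inner ℝ x ξ : ℝ) : ℂ)))) (t • ω)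
        rw [← this]
        refine integral_congr_ae (Filter.Eventually.of_forall fun y => ?_)
        have hy : y - t • ω + t • ω = y := sub_add_cancel _ _
        have hinner : (inner ℝ y ξ : ℝ) = t * (inner ℝ ω ξ : ℝ) + (inner ℝ (y - t • ω) ξ : ℝ) := by
          conv_lhs => rw [← hy]
          rw [inner_add_left, real_inner_smul_left]
          ring
        simp only [hinner]
        push_cast
        ring
    _ = ∫ p : ℝ × EuclideanSpace ℝ (Fin n),
          q p * Complex.exp (-2 * (Real.pi : ℂ) * Complex.I *
            (((p.1 : ℂ) * ((inner ℝ ω ξ : ℝ) : ℂ)) + ((inner ℝ p.2 ξ : ℝ) : ℂ))) :=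
        (integral_prod _ hF).symm
end

section
/- Let n ≥ 1, T > 0 and M > 0. There exist constants C > 0 and μ ∈ (0,1), depending only on n, T and M, with the following property: for every integrable q : ℝ × ℝⁿ → ℂ vanishing outside the set { (t,x) : t² + ‖x‖² ≤ 2T² } and satisfying ∫|q| ≤ M, for every α ≥ 1, and for every (τ,ξ) ∈ ℝ × ℝⁿ with τ² + ‖ξ‖² ≤ α², one has |q̂(τ,ξ)| ≤ C · e^{α(1−μ)} · ( sup_{(σ,η) ∈ E} |q̂(σ,η)| )^{μ}, where q̂ is the Fourier transform of q on ℝ^{1+n} and E = { (σ,η) ∈ ℝ × ℝⁿ : |σ| ≤ ‖η‖ }. -/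
set_option maxHeartbeats 1000000

open MeasureTheory

/-- The space-time Fourier transform of `q : ℝ × ℝⁿ → ℂ`, with the convention
`q̂(τ,ξ) = ∫ q(t,x) e^{-2πi(tτ + ⟨x,ξ⟩)} dt dx`. -/
noncomputable def spaceTimeFourier (n : ℕ) (q : ℝ × EuclideanSpace ℝ (Fin n) → ℂ)
    (τ : ℝ) (ξ : EuclideanSpace ℝ (Fin n)) : ℂ :=
  ∫ p : ℝ × EuclideanSpace ℝ (Fin n),
    q p * Complex.exp (-2 * (Real.pi : ℂ) * Complex.I *
      (((p.1 : ℂ) * (τ : ℂ)) + ((inner ℝ p.2 ξ : ℝ) : ℂ)))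

open Finset Complex
open scoped Nat

lemma pow_div_factorial_le_exp (y : ℝ) (hy : 0 ≤ y) (N : ℕ) :
    y ^ N / N ! ≤ Real.exp y := by
  have h : HasSum (fun n : ℕ => y ^ n / n !) (Real.exp y) := by
    rw [Real.exp_eq_exp_ℝ]
    exact NormedSpace.expSeries_div_hasSum_exp y
  exact le_hasSum h N (fun j _ => by positivity)

lemma nat_pow_le_exp_mul_factorial (N : ℕ) : (N : ℝ) ^ N ≤ Real.exp N * N ! := by
  have h := pow_div_factorial_le_exp N (by positivity) N
  have hfac : (0:ℝ) < N ! := by exact_mod_cast Nat.factorial_pos N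
  rw [div_le_iff₀ hfac] at h
  exact h

lemma exp_tail_bound (y : ℝ) (hy : 0 ≤ y) (N : ℕ) :
    ∑' i : ℕ, y ^ (i + N) / (i + N)! ≤ y ^ N / N ! * Real.exp y := by
  have hsum : Summable (fun i : ℕ => y ^ i / i !) := by
    exact NormedSpace.expSeries_div_summable y
  have hterm : ∀ i : ℕ, y ^ (i + N) / (i + N)! ≤ y ^ N / N ! * (y ^ i / i !) := by
    intro i
    have hdvd : (i ! * N ! : ℕ) ∣ (i + N)! := Nat.factorial_mul_factorial_dvd_factorial_add i N
    have hle : (i ! * N ! : ℝ) ≤ (i + N)! := by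
      exact_mod_cast Nat.le_of_dvd (Nat.factorial_pos _) hdvd
    have h1 : (0:ℝ) < i ! * N ! := by positivity
    have h2 : (0:ℝ) < ((i + N)! : ℝ) := by exact_mod_cast Nat.factorial_pos _
    rw [pow_add]
    rw [div_le_iff₀ h2]
    have : y ^ N / N ! * (y ^ i / i !) = y ^ i * y ^ N / (i ! * N !) := by ring
    rw [this, div_mul_eq_mul_div, le_div_iff₀ h1]
    have hyy : 0 ≤ y ^ i * y ^ N := by positivity
    calc y ^ i * y ^ N * (i ! * N !) ≤ y ^ i * y ^ N * (i + N)! := by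
          exact mul_le_mul_of_nonneg_left hle hyy
      _ = y ^ i * y ^ N * (i + N)! := rfl
  have hsum2 : Summable (fun i : ℕ => y ^ N / N ! * (y ^ i / i !)) := hsum.mul_left _
  have hsum1 : Summable (fun i : ℕ => y ^ (i + N) / (i + N)!) := by
    refine Summable.of_nonneg_of_le (fun i => by positivity) hterm hsum2
  calc ∑' i : ℕ, y ^ (i + N) / (i + N)! ≤ ∑' i : ℕ, y ^ N / N ! * (y ^ i / i !) :=
        Summable.tsum_le_tsum hterm hsum1 hsum2
    _ = y ^ N / N ! * Real.exp y := by
        rw [tsum_mul_left]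
        congr 1
        rw [Real.exp_eq_exp_ℝ]
        exact (NormedSpace.expSeries_div_hasSum_exp y).tsum_eq

lemma prod_range_factorial (j : ℕ) : ∏ i ∈ Finset.range j, ((j : ℝ) - (i:ℕ)) = j ! := by
  have h : ∀ i ∈ Finset.range j, ((j:ℝ) - (i:ℕ)) = ((j - i : ℕ) : ℝ) := by
    intro i hi
    have : i ≤ j := le_of_lt (Finset.mem_range.mp hi)
    push_cast [Nat.cast_sub this]
    ring
  rw [Finset.prod_congr rfl h, ← Nat.cast_prod]
  norm_cast
  rw [← Finset.prod_range_reflect]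
  have h2 : ∀ i ∈ Finset.range j, j - (j - 1 - i) = i + 1 := by
    intro i hi; have := Finset.mem_range.mp hi; omega
  rw [Finset.prod_congr rfl h2]
  exact Finset.prod_range_add_one_eq_factorial j

lemma prod_ico_factorial (j K : ℕ) : ∏ i ∈ Finset.Ico (j+1) (K+1), ((i:ℕ) - (j:ℝ)) = (K - j)! := by
  rw [Finset.prod_Ico_eq_prod_range]
  have h : ∀ i ∈ Finset.range (K + 1 - (j+1)), (((j+1+i : ℕ) : ℝ) - (j:ℝ)) = ((i+1 : ℕ) : ℝ) := by
    intro i _; push_cast; ring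
  rw [Finset.prod_congr rfl h, ← Nat.cast_prod]
  norm_cast
  have : K + 1 - (j + 1) = K - j := by omega
  rw [this]
  exact Finset.prod_range_add_one_eq_factorial (K - j)

lemma prod_abs_sub_eq (K j : ℕ) (hj : j ∈ Finset.range (K+1)) :
    ∏ i ∈ (Finset.range (K+1)).erase j, |(j:ℝ) - (i:ℕ)| = (j ! * (K-j)! : ℕ) := by
  have hjK : j ≤ K := by have := Finset.mem_range.mp hj; omega
  have hsplit : (Finset.range (K+1)).erase j = Finset.range j ∪ Finset.Ico (j+1) (K+1) := by
    ext i
    simp only [Finset.mem_erase, Finset.mem_range, Finset.mem_union, Finset.mem_Ico]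
    omega
  have hdisj : Disjoint (Finset.range j) (Finset.Ico (j+1) (K+1)) := by
    rw [Finset.disjoint_left]
    intro i hi hi2
    simp only [Finset.mem_range] at hi
    simp only [Finset.mem_Ico] at hi2
    omega
  rw [hsplit, Finset.prod_union hdisj]
  have h1 : ∀ i ∈ Finset.range j, |(j:ℝ) - (i:ℕ)| = ((j:ℝ) - (i:ℕ)) := by
    intro i hi
    have : (i:ℝ) < j := by exact_mod_cast Finset.mem_range.mp hi
    rw [abs_of_pos]; linarith
  have h2 : ∀ i ∈ Finset.Ico (j+1) (K+1), |(j:ℝ) - (i:ℕ)| = ((i:ℕ) - (j:ℝ)) := by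
    intro i hi
    have : (j:ℝ) < i := by exact_mod_cast (Finset.mem_Ico.mp hi).1
    rw [abs_of_neg]; ring; linarith
  rw [Finset.prod_congr rfl h1, Finset.prod_congr rfl h2, prod_range_factorial,
    prod_ico_factorial]
  push_cast
  ring

lemma sum_inv_factorials (K : ℕ) :
    ∑ j ∈ Finset.range (K+1), (1:ℝ) / (j ! * (K-j)!) = 2^K / K ! := by
  have h : ∀ j ∈ Finset.range (K+1), (1:ℝ) / (j ! * (K-j)!) = (K.choose j : ℝ) / K ! := by
    intro j hj
    have hjK : j ≤ K := by have := Finset.mem_range.mp hj; omega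
    have hid : K.choose j * j ! * (K-j)! = K ! := Nat.choose_mul_factorial_mul_factorial hjK
    have hid' : (K.choose j : ℝ) * (j ! * (K-j)!) = K ! := by
      rw [← mul_assoc]; exact_mod_cast congrArg (Nat.cast (R := ℝ)) hid
    have h1 : (0:ℝ) < j ! * (K-j)! := by positivity
    have h2 : (0:ℝ) < (K ! : ℝ) := by exact_mod_cast Nat.factorial_pos K
    field_simp
    linarith [hid']
  rw [Finset.sum_congr rfl h, ← Finset.sum_div]
  congr 1
  rw [← Nat.cast_sum]
  norm_cast
  exact Nat.sum_range_choose K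

lemma key_series_bound (K : ℕ) (c x : ℕ → ℝ) (L R θ Θ : ℝ)
    (hR : 0 ≤ R) (hΘ : 0 ≤ Θ) (hθ : |θ| ≤ Θ) (hL : 0 ≤ L)
    (hx : ∀ j ∈ Finset.range (K+1), 0 ≤ x j ∧ x j ≤ R)
    (hLsum : ∑ j ∈ Finset.range (K+1), |c j| ≤ L)
    (hrep : ∀ m ≤ K, ∑ j ∈ Finset.range (K+1), c j * x j ^ m = if m = 0 then 1 else 0) :
    ‖(1:ℂ) - ∑ j ∈ Finset.range (K+1), (c j : ℂ) *
        Complex.exp ((θ:ℂ) * (x j : ℂ) * Complex.I)‖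
      ≤ L * (Real.exp (Θ*R) * ((Θ*R)^(K+1) / (K+1)!)) := by
  set s := Finset.range (K+1) with hs
  set w : ℕ → ℂ := fun j => (θ:ℂ) * (x j : ℂ) * Complex.I with hw
  set F : ℕ → ℂ := fun m => ((θ:ℂ) * Complex.I)^m / m ! *
      ((∑ j ∈ s, c j * x j ^ m : ℝ) : ℂ) with hF
  have hhs : HasSum F (∑ j ∈ s, (c j : ℂ) * Complex.exp (w j)) := by
    have h1 : ∀ j ∈ s, HasSum (fun m : ℕ => (c j : ℂ) * (w j ^ m / m !))
        ((c j : ℂ) * Complex.exp (w j)) := by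
      intro j _
      refine HasSum.mul_left _ ?_
      rw [Complex.exp_eq_exp_ℂ]
      exact NormedSpace.expSeries_div_hasSum_exp (w j)
    have h2 := hasSum_sum h1
    convert h2 using 2 with m
    rw [hF]
    simp only
    push_cast
    rw [Finset.mul_sum]
    refine Finset.sum_congr rfl fun j _ => ?_
    rw [hw]
    simp only
    rw [mul_pow, mul_pow]
    ring
  have hhead : ∑ m ∈ Finset.range (K+1), F m = 1 := by
    rw [Finset.sum_eq_single_of_mem 0 (by simp)]
    · rw [hF]
      simp only
      rw [hrep 0 (Nat.zero_le K)]
      simp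
    · intro m hm hm0
      have hmK : m ≤ K := by have := Finset.mem_range.mp hm; omega
      rw [hF]
      simp only
      rw [hrep m hmK, if_neg hm0]
      simp
  have hFsummable : Summable F := hhs.summable
  have htail := Summable.sum_add_tsum_nat_add (f := F) (K+1) hFsummable
  have heq : (1:ℂ) - ∑ j ∈ s, (c j : ℂ) * Complex.exp ((θ:ℂ) * (x j : ℂ) * Complex.I)
      = - ∑' i : ℕ, F (i + (K+1)) := by
    have h3 : ∑ j ∈ s, (c j : ℂ) * Complex.exp ((θ:ℂ) * (x j : ℂ) * Complex.I)
        = 1 + ∑' i : ℕ, F (i + (K+1)) := by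
      rw [show (∑ j ∈ s, (c j : ℂ) * Complex.exp ((θ:ℂ) * (x j : ℂ) * Complex.I))
          = ∑ j ∈ s, (c j : ℂ) * Complex.exp (w j) from rfl, ← hhs.tsum_eq, ← htail, ← hs, hhead]
    rw [h3]; ring
  rw [heq, norm_neg]
  have hFbound : ∀ m : ℕ, ‖F m‖ ≤ L * ((Θ*R)^m / m !) := by
    intro m
    have hfacpos : (0:ℝ) < (m ! : ℝ) := by exact_mod_cast Nat.factorial_pos m
    rw [hF]
    simp only
    rw [norm_mul, norm_div]
    have h1 : ‖((θ:ℂ) * Complex.I)^m‖ = |θ|^m := by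
      rw [norm_pow, norm_mul, Complex.norm_I, Complex.norm_real]
      simp [Real.norm_eq_abs]
    have h2 : ‖((m:ℕ)! : ℂ)‖ = (m ! : ℝ) := Complex.norm_natCast _
    have h3 : ‖((∑ j ∈ s, c j * x j ^ m : ℝ) : ℂ)‖ ≤ L * R^m := by
      rw [Complex.norm_real, Real.norm_eq_abs]
      calc |∑ j ∈ s, c j * x j ^ m| ≤ ∑ j ∈ s, |c j * x j ^ m| := Finset.abs_sum_le_sum_abs _ _
        _ ≤ ∑ j ∈ s, |c j| * R^m := by
            refine Finset.sum_le_sum fun j hj => ?_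
            rw [abs_mul]
            refine mul_le_mul_of_nonneg_left ?_ (abs_nonneg _)
            rw [_root_.abs_pow]
            refine pow_le_pow_left₀ (abs_nonneg _) ?_ m
            rw [_root_.abs_of_nonneg (hx j hj).1]
            exact (hx j hj).2
        _ = (∑ j ∈ s, |c j|) * R^m := by rw [Finset.sum_mul]
        _ ≤ L * R^m := mul_le_mul_of_nonneg_right hLsum (by positivity)
    calc ‖((θ:ℂ) * Complex.I)^m‖ / ‖((m:ℕ)! : ℂ)‖ * ‖((∑ j ∈ s, c j * x j ^ m : ℝ) : ℂ)‖
        ≤ Θ^m / m ! * (L * R^m) := by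
          rw [h1, h2]
          refine mul_le_mul ?_ h3 (norm_nonneg _) (by positivity)
          gcongr
      _ = L * ((Θ*R)^m / m !) := by rw [mul_pow]; ring
  have hbase : Summable (fun i : ℕ => (Θ*R) ^ (i + (K+1)) / (i + (K+1))!) :=
    (summable_nat_add_iff (K+1)).mpr (NormedSpace.expSeries_div_summable (Θ*R))
  have hsummajor : Summable (fun i : ℕ => L * ((Θ*R) ^ (i + (K+1)) / (i + (K+1))!)) :=
    hbase.mul_left L
  have hnorm_summable : Summable (fun i : ℕ => ‖F (i + (K+1))‖) :=
    Summable.of_nonneg_of_le (fun i => norm_nonneg _) (fun i => hFbound _) hsummajor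
  calc ‖∑' i : ℕ, F (i + (K+1))‖ ≤ ∑' i : ℕ, ‖F (i + (K+1))‖ :=
        norm_tsum_le_tsum_norm hnorm_summable
    _ ≤ ∑' i : ℕ, L * ((Θ*R) ^ (i + (K+1)) / (i + (K+1))!) :=
        Summable.tsum_le_tsum (fun i => hFbound _) hnorm_summable hsummajor
    _ = L * ∑' i : ℕ, (Θ*R) ^ (i + (K+1)) / (i + (K+1))! := tsum_mul_left
    _ ≤ L * ((Θ*R)^(K+1) / (K+1)! * Real.exp (Θ*R)) :=
        mul_le_mul_of_nonneg_left (exp_tail_bound (Θ*R) (by positivity) (K+1)) hL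
    _ = L * (Real.exp (Θ*R) * ((Θ*R)^(K+1) / (K+1)!)) := by ring

lemma master_bound
    (n : ℕ) (hn : 1 ≤ n) (T M : ℝ) (hT : 0 < T)
    (q : ℝ × EuclideanSpace ℝ (Fin n) → ℂ) (hq : Integrable q)
    (hsupp : ∀ p : ℝ × EuclideanSpace ℝ (Fin n), ¬ (p.1 ^ 2 + ‖p.2‖ ^ 2 ≤ 2 * T ^ 2) → q p = 0)
    (hqM : (∫ p, ‖q p‖) ≤ M)
    (α : ℝ) (hα : 1 ≤ α) (τ : ℝ) (ξ : EuclideanSpace ℝ (Fin n))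
    (hball : τ ^ 2 + ‖ξ‖ ^ 2 ≤ α ^ 2)
    (S : ℝ) (hS : ∀ σ (η : EuclideanSpace ℝ (Fin n)), |σ| ≤ ‖η‖ → ‖spaceTimeFourier n q σ η‖ ≤ S)
    (K : ℕ) (hK : 1 ≤ K) :
    ‖spaceTimeFourier n q τ ξ‖ ≤
      (12:ℝ)^K * S +
      (12:ℝ)^K * (Real.exp (16*T*(4*α)) * ((16*T*(4*α))^(K+1) / (K+1)!)) * M := by
  have hα0 : (0:ℝ) < α := lt_of_lt_of_le one_pos hα
  have hτ : |τ| ≤ α := by nlinarith [_root_.sq_abs τ, abs_nonneg τ, sq_nonneg ‖ξ‖]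
  have hξ : ‖ξ‖ ≤ α := by nlinarith [norm_nonneg ξ, sq_nonneg τ]
  set e : EuclideanSpace ℝ (Fin n) := EuclideanSpace.single (⟨0, hn⟩ : Fin n) (1:ℝ) with he_def
  have he : ‖e‖ = 1 := by rw [he_def, EuclideanSpace.norm_single]; norm_num
  have hKpos : (0:ℝ) < (K:ℝ) := by exact_mod_cast Nat.pos_of_ne_zero (by omega)
  set v : ℕ → ℝ := fun j => 2*α + j * (2*α/K) with hv_def
  have hstep : (0:ℝ) < 2*α/K := by positivity
  have hv_lb : ∀ j ∈ Finset.range (K+1), 2*α ≤ v j := by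
    intro j _
    have h1 : (0:ℝ) ≤ j * (2*α/K) := by positivity
    simp only [hv_def]; linarith
  have hv_ub : ∀ j ∈ Finset.range (K+1), v j ≤ 4*α := by
    intro j hj
    have hjK : (j:ℝ) ≤ (K:ℝ) := by exact_mod_cast Nat.lt_succ_iff.mp (Finset.mem_range.mp hj)
    have h1 : (j:ℝ) * (2*α/K) ≤ (K:ℝ) * (2*α/K) := mul_le_mul_of_nonneg_right hjK hstep.le
    have h2 : (K:ℝ) * (2*α/K) = 2*α := by field_simp
    simp only [hv_def]; linarith
  have hinj : Set.InjOn v (Finset.range (K+1) : Finset ℕ) := by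
    intro a _ b _ hab
    simp only [hv_def] at hab
    have h1 : (a:ℝ) * (2*α/K) = (b:ℝ) * (2*α/K) := by linarith
    have h2 : (a:ℝ) = b := mul_right_cancel₀ (ne_of_gt hstep) h1
    exact_mod_cast h2
  set c : ℕ → ℝ := fun j => Polynomial.eval 0 (Lagrange.basis (Finset.range (K+1)) v j)
    with hc_def
  have hrep : ∀ m ≤ K, ∑ j ∈ Finset.range (K+1), c j * v j ^ m
      = if m = 0 then 1 else 0 := by
    intro m hm
    have hdeg : (Polynomial.X ^ m : Polynomial ℝ).degree < (Finset.range (K+1)).card := by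
      rw [Polynomial.degree_X_pow, Finset.card_range]
      exact_mod_cast Nat.lt_succ_of_le hm
    have hinterp := Lagrange.eq_interpolate (v := v) hinj hdeg
    have heval := congrArg (Polynomial.eval 0) hinterp
    rw [Lagrange.interpolate_apply, Polynomial.eval_finset_sum] at heval
    rw [Polynomial.eval_pow, Polynomial.eval_X] at heval
    have h4 : ∀ i ∈ Finset.range (K+1),
        Polynomial.eval 0 (Polynomial.C ((Polynomial.X ^ m : Polynomial ℝ).eval (v i)) *
          Lagrange.basis (Finset.range (K+1)) v i) = c i * v i ^ m := by
      intro i _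
      rw [Polynomial.eval_mul, Polynomial.eval_C, Polynomial.eval_pow, Polynomial.eval_X, hc_def]
      ring
    rw [Finset.sum_congr rfl h4] at heval
    rw [← heval, zero_pow_eq]
  have hcbound : ∀ j ∈ Finset.range (K+1), |c j| ≤ (2*(K:ℝ))^K / (j ! * (K-j)!) := by
    intro j hj
    have hcard : ((Finset.range (K+1)).erase j).card = K := by
      rw [Finset.card_erase_of_mem hj, Finset.card_range]
      omega
    rw [hc_def]
    simp only
    rw [Lagrange.basis, Polynomial.eval_prod, Finset.abs_prod]
    have hfac : ∀ i ∈ (Finset.range (K+1)).erase j,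
        |Polynomial.eval 0 (Lagrange.basisDivisor (v j) (v i))|
          = |v i| / ((2*α/K) * |(j:ℝ) - (i:ℕ)|) := by
      intro i hi
      have hvdiff : |v j - v i| = (2*α/K) * |(j:ℝ) - (i:ℕ)| := by
        have h5 : v j - v i = ((j:ℝ) - (i:ℕ)) * (2*α/K) := by
          simp only [hv_def]; push_cast; ring
        rw [h5, abs_mul, abs_of_pos hstep]; ring
      have h6 : Polynomial.eval 0 (Lagrange.basisDivisor (v j) (v i))
          = (v j - v i)⁻¹ * (-(v i)) := by
        rw [Lagrange.basisDivisor]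
        simp
      rw [h6, abs_mul, abs_neg, abs_inv, hvdiff, inv_mul_eq_div]
    rw [Finset.prod_congr rfl hfac]
    have hjK : (0:ℝ) < 2*(K:ℝ) := by linarith
    have hprod_le : ∏ i ∈ (Finset.range (K+1)).erase j, |v i| / ((2*α/K) * |(j:ℝ) - (i:ℕ)|)
        ≤ ∏ i ∈ (Finset.range (K+1)).erase j, (4*α) / ((2*α/K) * |(j:ℝ) - (i:ℕ)|) := by
      refine Finset.prod_le_prod ?_ ?_
      · intro i _
        positivity
      intro i hi
      have hine : i ≠ j := (Finset.mem_erase.mp hi).1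
      have hiK : i ∈ Finset.range (K+1) := (Finset.mem_erase.mp hi).2
      have habs : (0:ℝ) < |(j:ℝ) - (i:ℕ)| := by
        rw [abs_pos, sub_ne_zero]
        exact fun hc => hine (Nat.cast_injective hc.symm)
      have hvi : |v i| ≤ 4*α := by
        rw [_root_.abs_of_nonneg (by linarith [hv_lb i hiK] : (0:ℝ) ≤ v i)]
        exact hv_ub i hiK
      gcongr
    refine hprod_le.trans (le_of_eq ?_)
    have hfac2 : ∀ i ∈ (Finset.range (K+1)).erase j,
        (4*α) / ((2*α/K) * |(j:ℝ) - (i:ℕ)|) = (2*(K:ℝ)) / |(j:ℝ) - (i:ℕ)| := by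
      intro i hi
      have hine : i ≠ j := (Finset.mem_erase.mp hi).1
      have habs : (0:ℝ) < |(j:ℝ) - (i:ℕ)| := by
        rw [abs_pos, sub_ne_zero]
        exact fun hc => hine (Nat.cast_injective hc.symm)
      field_simp
      ring
    rw [Finset.prod_congr rfl hfac2, Finset.prod_div_distrib, Finset.prod_const, hcard,
      prod_abs_sub_eq K j hj]
    push_cast
    ring
  have hL12 : ∑ j ∈ Finset.range (K+1), |c j| ≤ (12:ℝ)^K := by
    have hKfac : (0:ℝ) < (K ! : ℝ) := by exact_mod_cast Nat.factorial_pos K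
    calc ∑ j ∈ Finset.range (K+1), |c j|
        ≤ ∑ j ∈ Finset.range (K+1), (2*(K:ℝ))^K / (j ! * (K-j)!) :=
          Finset.sum_le_sum hcbound
      _ = (2*(K:ℝ))^K * ∑ j ∈ Finset.range (K+1), (1:ℝ) / (j ! * (K-j)!) := by
          rw [Finset.mul_sum]
          refine Finset.sum_congr rfl ?_
          intro j _
          rw [mul_one_div]
      _ = (2*(K:ℝ))^K * (2^K / K !) := by rw [sum_inv_factorials]
      _ = 4^K * ((K:ℝ)^K / K !) := by
          rw [mul_pow, show (4:ℝ)^K = 2^K * 2^K by rw [← mul_pow]; norm_num]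
          ring
      _ ≤ 4^K * Real.exp K := by
          refine mul_le_mul_of_nonneg_left ?_ (by positivity)
          rw [div_le_iff₀ hKfac]
          exact nat_pow_le_exp_mul_factorial K
      _ ≤ 4^K * 3^K := by
          refine mul_le_mul_of_nonneg_left ?_ (by positivity)
          have h1 : Real.exp (K:ℝ) = (Real.exp 1)^K := by
            rw [← Real.exp_nat_mul]; norm_num
          rw [h1]
          exact pow_le_pow_left₀ (Real.exp_pos 1).le
            (le_of_lt (lt_of_lt_of_le Real.exp_one_lt_d9 (by norm_num))) K
      _ = 12^K := by rw [← mul_pow]; norm_num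
  -- analysis part
  set Φ : ℝ × EuclideanSpace ℝ (Fin n) → ℂ := fun p =>
    q p * Complex.exp (-2 * (Real.pi:ℂ) * Complex.I *
      (((p.1:ℂ) * (τ:ℂ)) + ((inner ℝ p.2 ξ : ℝ) : ℂ))) with hΦ_def
  set θf : ℝ × EuclideanSpace ℝ (Fin n) → ℝ := fun p => -2 * Real.pi * (inner ℝ p.2 e : ℝ)
    with hθf_def
  have hnorm0 : ∀ p : ℝ × EuclideanSpace ℝ (Fin n),
      ‖Complex.exp (-2 * (Real.pi:ℂ) * Complex.I *
        (((p.1:ℂ) * (τ:ℂ)) + ((inner ℝ p.2 ξ : ℝ) : ℂ)))‖ = 1 := by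
    intro p
    have harg : -2 * (Real.pi:ℂ) * Complex.I * (((p.1:ℂ) * (τ:ℂ)) + ((inner ℝ p.2 ξ : ℝ) : ℂ))
        = ((-2*Real.pi*(p.1*τ + (inner ℝ p.2 ξ : ℝ)) : ℝ) : ℂ) * Complex.I := by
      push_cast; ring
    rw [harg, Complex.norm_exp_ofReal_mul_I]
  have hnormr : ∀ (r : ℝ) (p : ℝ × EuclideanSpace ℝ (Fin n)),
      ‖Complex.exp (((θf p : ℝ):ℂ) * (r:ℂ) * Complex.I)‖ = 1 := by
    intro r p
    have harg : ((θf p : ℝ):ℂ) * (r:ℂ) * Complex.I = ((θf p * r : ℝ) : ℂ) * Complex.I := by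
      push_cast; ring
    rw [harg, Complex.norm_exp_ofReal_mul_I]
  have hsplit : ∀ r : ℝ, ∀ p : ℝ × EuclideanSpace ℝ (Fin n),
      q p * Complex.exp (-2 * (Real.pi:ℂ) * Complex.I *
        (((p.1:ℂ) * (τ:ℂ)) + ((inner ℝ p.2 (ξ + r • e) : ℝ) : ℂ)))
      = Φ p * Complex.exp (((θf p : ℝ):ℂ) * (r:ℂ) * Complex.I) := by
    intro r p
    have hin : (inner ℝ p.2 (ξ + r • e) : ℝ) = (inner ℝ p.2 ξ : ℝ) + r * (inner ℝ p.2 e : ℝ) := by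
      rw [inner_add_right, real_inner_smul_right]
    rw [hΦ_def, hθf_def]
    simp only
    rw [hin, mul_assoc (q p) (Complex.exp _) (Complex.exp _), ← Complex.exp_add]
    congr 2
    push_cast
    ring
  have hstf : ∀ r : ℝ, spaceTimeFourier n q τ (ξ + r • e)
      = ∫ p, Φ p * Complex.exp (((θf p : ℝ):ℂ) * (r:ℂ) * Complex.I) := by
    intro r
    simp only [spaceTimeFourier]
    exact integral_congr_ae (Filter.Eventually.of_forall (hsplit r))
  have hconte : Continuous fun p : ℝ × EuclideanSpace ℝ (Fin n) => (inner ℝ p.2 e : ℝ) :=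
    continuous_snd.inner continuous_const
  have hcontξ : Continuous fun p : ℝ × EuclideanSpace ℝ (Fin n) => (inner ℝ p.2 ξ : ℝ) :=
    continuous_snd.inner continuous_const
  have hg0 : Continuous fun p : ℝ × EuclideanSpace ℝ (Fin n) =>
      Complex.exp (-2 * (Real.pi:ℂ) * Complex.I *
        (((p.1:ℂ) * (τ:ℂ)) + ((inner ℝ p.2 ξ : ℝ) : ℂ))) := by
    refine Complex.continuous_exp.comp ?_
    refine Continuous.mul continuous_const ?_
    refine Continuous.add ?_ ?_
    · exact (Complex.continuous_ofReal.comp continuous_fst).mul continuous_const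
    · exact Complex.continuous_ofReal.comp hcontξ
  have hgr : ∀ r : ℝ, Continuous fun p : ℝ × EuclideanSpace ℝ (Fin n) =>
      Complex.exp (((θf p : ℝ):ℂ) * (r:ℂ) * Complex.I) := by
    intro r
    refine Complex.continuous_exp.comp ?_
    refine Continuous.mul (Continuous.mul ?_ continuous_const) continuous_const
    refine Complex.continuous_ofReal.comp ?_
    rw [hθf_def]
    exact continuous_const.mul hconte
  have hbb : ∀ g : ℝ × EuclideanSpace ℝ (Fin n) → ℂ, Continuous g → (∀ p, ‖g p‖ = 1) →
      Integrable (fun p => q p * g p) := by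
    intro g hg hg1
    have h1 : (fun p => q p * g p) = fun p => g p * q p := funext fun p => mul_comm _ _
    rw [h1]
    exact hq.bdd_mul (c := 1) hg.aestronglyMeasurable (Filter.Eventually.of_forall fun x => le_of_eq (hg1 x))
  have hΦ_int : Integrable Φ := by
    rw [hΦ_def]
    exact hbb _ hg0 hnorm0
  have hint_r : ∀ r : ℝ,
      Integrable (fun p => Φ p * Complex.exp (((θf p : ℝ):ℂ) * (r:ℂ) * Complex.I)) := by
    intro r
    have h1 : (fun p => Φ p * Complex.exp (((θf p : ℝ):ℂ) * (r:ℂ) * Complex.I))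
        = fun p => q p * (Complex.exp (-2 * (Real.pi:ℂ) * Complex.I *
            (((p.1:ℂ) * (τ:ℂ)) + ((inner ℝ p.2 ξ : ℝ) : ℂ))) *
          Complex.exp (((θf p : ℝ):ℂ) * (r:ℂ) * Complex.I)) := by
      funext p
      rw [hΦ_def]
      simp only
      ring
    rw [h1]
    refine hbb _ (Continuous.mul hg0 (hgr r)) ?_
    intro p
    rw [norm_mul, hnorm0 p, hnormr r p, one_mul]
  set ε : ℝ := (12:ℝ)^K * (Real.exp (16*T*(4*α)) * ((16*T*(4*α))^(K+1) / (K+1)!)) with hε_def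
  have hε0 : 0 ≤ ε := by positivity
  set G : ℕ → ℂ := fun j => ∫ p, Φ p * Complex.exp (((θf p : ℝ):ℂ) * ((v j):ℂ) * Complex.I)
    with hG_def
  have hsum_int : (∫ p, ∑ j ∈ Finset.range (K+1), ((c j : ℝ):ℂ) *
        (Φ p * Complex.exp (((θf p : ℝ):ℂ) * ((v j):ℂ) * Complex.I)))
      = ∑ j ∈ Finset.range (K+1), ((c j : ℝ):ℂ) * G j := by
    rw [integral_finset_sum _ (fun j _ => ((hint_r (v j)).const_mul _))]
    refine Finset.sum_congr rfl ?_
    intro j _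
    rw [hG_def]
    exact integral_const_mul _ _
  have h0 : spaceTimeFourier n q τ ξ = ∫ p, Φ p := by
    simp only [spaceTimeFourier, hΦ_def]
  have hkey : spaceTimeFourier n q τ ξ - ∑ j ∈ Finset.range (K+1), ((c j : ℝ):ℂ) * G j
      = ∫ p, Φ p * ((1:ℂ) - ∑ j ∈ Finset.range (K+1), ((c j : ℝ):ℂ) *
          Complex.exp (((θf p : ℝ):ℂ) * ((v j):ℂ) * Complex.I)) := by
    rw [h0, ← hsum_int, ← integral_sub hΦ_int
      (integrable_finset_sum _ (fun j _ => ((hint_r (v j)).const_mul _)))]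
    refine integral_congr_ae (Filter.Eventually.of_forall ?_)
    intro p
    simp only
    rw [mul_sub, mul_one, Finset.mul_sum]
    congr 1
    refine Finset.sum_congr rfl ?_
    intro j _
    ring
  have hptws : ∀ p : ℝ × EuclideanSpace ℝ (Fin n),
      ‖Φ p * ((1:ℂ) - ∑ j ∈ Finset.range (K+1), ((c j : ℝ):ℂ) *
        Complex.exp (((θf p : ℝ):ℂ) * ((v j):ℂ) * Complex.I))‖ ≤ ε * ‖q p‖ := by
    intro p
    have hΦn : ‖Φ p‖ = ‖q p‖ := by
      rw [hΦ_def]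
      simp only
      rw [norm_mul, hnorm0 p, mul_one]
    rw [norm_mul, hΦn]
    by_cases hqp : q p = 0
    · simp [hqp]
    · have hsupp2 : p.1^2 + ‖p.2‖^2 ≤ 2*T^2 := by
        by_contra hcc
        exact hqp (hsupp p hcc)
      have hθb : |θf p| ≤ 16*T := by
        have h1 : |(inner ℝ p.2 e : ℝ)| ≤ ‖p.2‖ := by
          have h2 := abs_real_inner_le_norm p.2 e
          rwa [he, mul_one] at h2
        have h2 : ‖p.2‖ ≤ 2*T := by nlinarith [norm_nonneg p.2, sq_nonneg p.1]
        have h3 : |θf p| = 2*Real.pi*|(inner ℝ p.2 e : ℝ)| := by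
          rw [hθf_def]
          simp only
          rw [abs_mul, _root_.abs_of_nonpos (by nlinarith [Real.pi_pos] : (-2)*Real.pi ≤ 0)]
          ring
        nlinarith [Real.pi_pos, Real.pi_le_four, abs_nonneg (inner ℝ p.2 e : ℝ),
          mul_le_mul_of_nonneg_left h1 (by positivity : (0:ℝ) ≤ 2*Real.pi),
          mul_le_mul_of_nonneg_right Real.pi_le_four (norm_nonneg p.2),
          norm_nonneg p.2]
      have hser := key_series_bound K c v ((12:ℝ)^K) (4*α) (θf p) (16*T)
        (by positivity) (by positivity) hθb (by positivity)
        (fun j hj => ⟨by linarith [hv_lb j hj], hv_ub j hj⟩) hL12 hrep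
      calc ‖q p‖ * ‖(1:ℂ) - ∑ j ∈ Finset.range (K+1), ((c j : ℝ):ℂ) *
            Complex.exp (((θf p : ℝ):ℂ) * ((v j):ℂ) * Complex.I)‖
          ≤ ‖q p‖ * ε := by
            refine mul_le_mul_of_nonneg_left ?_ (norm_nonneg _)
            rw [hε_def]
            exact hser
        _ = ε * ‖q p‖ := mul_comm _ _
  have hdiff_norm : ‖spaceTimeFourier n q τ ξ
      - ∑ j ∈ Finset.range (K+1), ((c j : ℝ):ℂ) * G j‖ ≤ ε * M := by
    rw [hkey]
    refine (norm_integral_le_of_norm_le ((hq.norm).const_mul ε)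
      (Filter.Eventually.of_forall hptws)).trans ?_
    rw [integral_const_mul]
    exact mul_le_mul_of_nonneg_left hqM hε0
  have hS0 : (0:ℝ) ≤ S := le_trans (norm_nonneg _) (hS 0 0 (by simp))
  have hsum_norm : ‖∑ j ∈ Finset.range (K+1), ((c j : ℝ):ℂ) * G j‖ ≤ (12:ℝ)^K * S := by
    calc ‖∑ j ∈ Finset.range (K+1), ((c j : ℝ):ℂ) * G j‖
        ≤ ∑ j ∈ Finset.range (K+1), ‖((c j : ℝ):ℂ) * G j‖ := norm_sum_le _ _
      _ ≤ ∑ j ∈ Finset.range (K+1), |c j| * S := by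
          refine Finset.sum_le_sum ?_
          intro j hj
          rw [norm_mul, Complex.norm_real, Real.norm_eq_abs]
          refine mul_le_mul_of_nonneg_left ?_ (abs_nonneg _)
          rw [hG_def]
          simp only
          rw [← hstf (v j)]
          refine hS τ _ ?_
          have h8 : ‖v j • e‖ ≤ ‖ξ + v j • e‖ + ‖ξ‖ := by
            have h8a := norm_sub_le (ξ + v j • e) ξ
            rwa [add_sub_cancel_left] at h8a
          have h9 : ‖v j • e‖ = v j := by
            rw [norm_smul, he, mul_one, Real.norm_eq_abs,
              _root_.abs_of_nonneg (by linarith [hv_lb j hj] : (0:ℝ) ≤ v j)]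
          have h10 := hv_lb j hj
          linarith
      _ = (∑ j ∈ Finset.range (K+1), |c j|) * S := by rw [← Finset.sum_mul]
      _ ≤ (12:ℝ)^K * S := mul_le_mul_of_nonneg_right hL12 hS0
  calc ‖spaceTimeFourier n q τ ξ‖
      = ‖(spaceTimeFourier n q τ ξ - ∑ j ∈ Finset.range (K+1), ((c j : ℝ):ℂ) * G j)
        + ∑ j ∈ Finset.range (K+1), ((c j : ℝ):ℂ) * G j‖ := by rw [sub_add_cancel]
    _ ≤ ‖spaceTimeFourier n q τ ξ - ∑ j ∈ Finset.range (K+1), ((c j : ℝ):ℂ) * G j‖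
        + ‖∑ j ∈ Finset.range (K+1), ((c j : ℝ):ℂ) * G j‖ := norm_add_le _ _
    _ ≤ ε * M + (12:ℝ)^K * S := add_le_add hdiff_norm hsum_norm
    _ = (12:ℝ)^K * S + (12:ℝ)^K * (Real.exp (16*T*(4*α)) * ((16*T*(4*α))^(K+1) / (K+1)!)) * M
        := by rw [hε_def]; ring

lemma exp_le_three_pow (N : ℕ) : Real.exp (N:ℝ) ≤ (3:ℝ)^N := by
  have h1 : Real.exp (N:ℝ) = (Real.exp 1)^N := by
    rw [← Real.exp_nat_mul]; norm_num
  rw [h1]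
  exact pow_le_pow_left₀ (Real.exp_pos 1).le
    (le_of_lt (lt_of_lt_of_le Real.exp_one_lt_d9 (by norm_num))) N

lemma twelve_le_exp_three : (12:ℝ) ≤ Real.exp 3 := by
  have h1 : Real.exp (3:ℝ) = (Real.exp 1)^3 := by
    rw [show (3:ℝ) = ((3:ℕ):ℝ) by norm_num, ← Real.exp_nat_mul]; norm_num
  rw [h1]
  have h2 : (2.7:ℝ)^3 ≤ (Real.exp 1)^3 := by
    refine pow_le_pow_left₀ (by norm_num) ?_ 3
    exact le_of_lt (lt_of_le_of_lt (by norm_num) Real.exp_one_gt_d9)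
  nlinarith
  
lemma tail_small (y : ℝ) (hy : 0 ≤ y) (N : ℕ) (hN1 : 1 ≤ N) (hNy : 2000*y ≤ N) :
    (12:ℝ)^N * (Real.exp y * (y^N/N !)) ≤ (1/18:ℝ)^N := by
  have hN0 : (0:ℝ) < N := by exact_mod_cast Nat.pos_of_ne_zero (by omega)
  have hNfac : (0:ℝ) < (N ! : ℝ) := by exact_mod_cast Nat.factorial_pos N
  have hA : (N:ℝ)^N ≤ 3^N * N ! :=
    (nat_pow_le_exp_mul_factorial N).trans
      (mul_le_mul_of_nonneg_right (exp_le_three_pow N) hNfac.le)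
  have h1 : y^N/N ! ≤ (3*y/N)^N := by
    have hrw : (3*y/(N:ℝ))^N = 3^N * y^N / (N:ℝ)^N := by
      rw [div_pow, mul_pow]
    rw [hrw, div_le_div_iff₀ hNfac (pow_pos hN0 N)]
    calc y^N * (N:ℝ)^N ≤ y^N * (3^N * N !) :=
          mul_le_mul_of_nonneg_left hA (by positivity)
      _ = 3^N * y^N * N ! := by ring
  have h2 : (3*y/(N:ℝ))^N ≤ (3/2000:ℝ)^N := by
    refine pow_le_pow_left₀ (by positivity) ?_ N
    rw [div_le_div_iff₀ hN0 (by norm_num : (0:ℝ) < 2000)]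
    linarith
  have h3 : Real.exp y ≤ (3:ℝ)^N := by
    refine (Real.exp_le_exp.mpr ?_).trans (exp_le_three_pow N)
    linarith
  calc (12:ℝ)^N * (Real.exp y * (y^N/N !))
      ≤ (12:ℝ)^N * ((3:ℝ)^N * (3/2000:ℝ)^N) := by
        refine mul_le_mul_of_nonneg_left ?_ (by positivity)
        refine mul_le_mul h3 (h1.trans h2) (by positivity) (by positivity)
    _ = ((12:ℝ) * 3 * (3/2000))^N := by rw [mul_pow, mul_pow]; ring
    _ ≤ (1/18:ℝ)^N := by
        refine pow_le_pow_left₀ (by norm_num) (by norm_num) N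

lemma sqrt_le_add_one (M : ℝ) (hM : 0 ≤ M) : Real.sqrt M ≤ M + 1 := by
  rw [show M + 1 = Real.sqrt ((M+1)^2) by rw [Real.sqrt_sq (by linarith)]]
  exact Real.sqrt_le_sqrt (by nlinarith)

lemma weak_bound
    (n : ℕ) (hn : 1 ≤ n) (T M : ℝ) (hT : 0 < T) (hM : 0 < M)
    (q : ℝ × EuclideanSpace ℝ (Fin n) → ℂ) (hq : Integrable q)
    (hsupp : ∀ p : ℝ × EuclideanSpace ℝ (Fin n), ¬ (p.1 ^ 2 + ‖p.2‖ ^ 2 ≤ 2 * T ^ 2) → q p = 0)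
    (hqM : (∫ p, ‖q p‖) ≤ M)
    (α : ℝ) (hα : 1 ≤ α) (τ : ℝ) (ξ : EuclideanSpace ℝ (Fin n))
    (hball : τ ^ 2 + ‖ξ‖ ^ 2 ≤ α ^ 2)
    (S : ℝ) (hS : ∀ σ (η : EuclideanSpace ℝ (Fin n)), |σ| ≤ ‖η‖ → ‖spaceTimeFourier n q σ η‖ ≤ S)
    (hS0 : 0 ≤ S) (hSM : S ≤ M) :
    ‖spaceTimeFourier n q τ ξ‖ ≤
      Real.exp 10 * (M+1) * Real.exp (384000*T*α) * Real.sqrt S := by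
  have hα0 : (0:ℝ) < α := lt_of_lt_of_le one_pos hα
  set y : ℝ := 16*T*(4*α) with hy_def
  have hy0 : 0 < y := by rw [hy_def]; positivity
  have hyy : (6000:ℝ)*y = 384000*T*α := by rw [hy_def]; ring
  rcases eq_or_lt_of_le hS0 with hSz | hSpos
  · -- S = 0
    set K₁ : ℕ := 1 + ⌈2000*y⌉₊ with hK₁
    have hbound : ∀ K : ℕ, K ≥ K₁ → ‖spaceTimeFourier n q τ ξ‖ ≤ (1/18:ℝ)^(K+1) * M := by
      intro K hKK
      have hK1 : 1 ≤ K := le_trans (by omega) hKK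
      have h2000 : 2000*y ≤ ((K+1:ℕ):ℝ) := by
        have hceil : 2000*y ≤ (⌈2000*y⌉₊ : ℝ) := Nat.le_ceil _
        have : (⌈2000*y⌉₊ : ℝ) ≤ ((K+1:ℕ):ℝ) := by
          have : ⌈2000*y⌉₊ ≤ K+1 := by omega
          exact_mod_cast this
        linarith
      have hmb := master_bound n hn T M hT q hq hsupp hqM α hα τ ξ hball S hS K hK1
      rw [← hSz] at hmb
      have hts := tail_small y hy0.le (K+1) (by omega) (by exact_mod_cast h2000)
      calc ‖spaceTimeFourier n q τ ξ‖
          ≤ (12:ℝ)^K * 0 + (12:ℝ)^K * (Real.exp y * (y^(K+1) / (K+1)!)) * M := hmb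
        _ = (12:ℝ)^K * (Real.exp y * (y^(K+1) / (K+1)!)) * M := by ring
        _ ≤ (12:ℝ)^(K+1) * (Real.exp y * (y^(K+1) / (K+1)!)) * M := by
            have h12 : (12:ℝ)^K ≤ (12:ℝ)^(K+1) := by
              refine pow_le_pow_right₀ (by norm_num) (by omega)
            refine mul_le_mul_of_nonneg_right (mul_le_mul_of_nonneg_right h12 ?_) hM.le
            positivity
        _ ≤ (1/18:ℝ)^(K+1) * M := mul_le_mul_of_nonneg_right hts hM.le
    have hlim : Filter.Tendsto (fun K : ℕ => (1/18:ℝ)^(K+1) * M) Filter.atTop (nhds 0) := by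
      have h1 : Filter.Tendsto (fun K : ℕ => (1/18:ℝ)^K) Filter.atTop (nhds 0) :=
        tendsto_pow_atTop_nhds_zero_of_lt_one (by norm_num) (by norm_num)
      have h2 := (h1.comp (Filter.tendsto_add_atTop_nat 1)).mul_const M
      simpa using h2
    have hle0 : ‖spaceTimeFourier n q τ ξ‖ ≤ 0 :=
      ge_of_tendsto hlim (Filter.eventually_atTop.mpr ⟨K₁, hbound⟩)
    rw [← hSz, Real.sqrt_zero, mul_zero]
    exact hle0
  · -- S > 0
    have hMS1 : (1:ℝ) ≤ M / S := (one_le_div hSpos).mpr hSM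
    set ℓ : ℝ := Real.log (M/S) with hℓ_def
    have hℓ0 : 0 ≤ ℓ := Real.log_nonneg hMS1
    have hlog12 : (0:ℝ) < Real.log 12 := Real.log_pos (by norm_num)
    set m : ℕ := ⌈ℓ/(2*Real.log 12)⌉₊ with hm_def
    set K : ℕ := 1 + ⌈2000*y⌉₊ + m with hK_def
    have hK1 : 1 ≤ K := by omega
    have h2000 : 2000*y ≤ ((K+1:ℕ):ℝ) := by
      have hceil : 2000*y ≤ (⌈2000*y⌉₊ : ℝ) := Nat.le_ceil _
      have h5 : (⌈2000*y⌉₊ : ℝ) ≤ ((K+1:ℕ):ℝ) := by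
        have : ⌈2000*y⌉₊ ≤ K+1 := by omega
        exact_mod_cast this
      linarith
    -- sqrt facts
    have hexp2 : Real.exp (ℓ/2)^2 = M/S := by
      rw [sq, ← Real.exp_add]
      rw [show ℓ/2 + ℓ/2 = ℓ by ring, hℓ_def]
      exact Real.exp_log (by positivity)
    have hsqrtMS : Real.exp (ℓ/2) = Real.sqrt (M/S) := by
      rw [show M/S = Real.exp (ℓ/2)^2 from hexp2.symm,
        Real.sqrt_sq (Real.exp_pos _).le]
    have hexpS : Real.exp (ℓ/2) * S = Real.sqrt M * Real.sqrt S := by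
      rw [hsqrtMS, Real.sqrt_div' M hSpos.le]
      rw [show Real.sqrt M / Real.sqrt S * S = Real.sqrt M * (S / Real.sqrt S) by ring,
        Real.div_sqrt]
    have hexpnegS : Real.exp (-(ℓ/2)) * M = Real.sqrt M * Real.sqrt S := by
      rw [Real.exp_neg, hsqrtMS, Real.sqrt_div' M hSpos.le]
      rw [inv_div]
      rw [div_mul_eq_mul_div, mul_comm (Real.sqrt S) M]
      rw [show M * Real.sqrt S / Real.sqrt M = Real.sqrt S * (M / Real.sqrt M) by ring,
        Real.div_sqrt]
      ring
    -- bound 12^m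
    have h12m : (12:ℝ)^m ≤ 12 * Real.exp (ℓ/2) := by
      have hm1 : (m:ℝ) ≤ ℓ/(2*Real.log 12) + 1 := le_of_lt (Nat.ceil_lt_add_one (by positivity))
      have h6 : (12:ℝ)^m = Real.exp (m * Real.log 12) := by
        rw [Real.exp_nat_mul, Real.exp_log (by norm_num : (0:ℝ) < 12)]
      rw [h6]
      have h7 : (m:ℝ) * Real.log 12 ≤ ℓ/2 + Real.log 12 := by
        have := mul_le_mul_of_nonneg_right hm1 hlog12.le
        calc (m:ℝ) * Real.log 12 ≤ (ℓ/(2*Real.log 12) + 1) * Real.log 12 := this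
          _ = ℓ/2 + Real.log 12 := by field_simp
      calc Real.exp ((m:ℝ) * Real.log 12) ≤ Real.exp (ℓ/2 + Real.log 12) :=
            Real.exp_le_exp.mpr h7
        _ = Real.exp (ℓ/2) * 12 := by
            rw [Real.exp_add, Real.exp_log (by norm_num : (0:ℝ) < 12)]
        _ = 12 * Real.exp (ℓ/2) := mul_comm _ _
    -- bound 12^(1+ceil)
    have h12c : (12:ℝ)^(1 + ⌈2000*y⌉₊) ≤ Real.exp 6 * Real.exp (6000*y) := by
      have hc1 : ((1 + ⌈2000*y⌉₊ : ℕ):ℝ) ≤ 2 + 2000*y := by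
        have := le_of_lt (Nat.ceil_lt_add_one (by positivity : (0:ℝ) ≤ 2000*y))
        push_cast
        linarith
      have h6 : (12:ℝ)^(1 + ⌈2000*y⌉₊) = Real.exp (((1 + ⌈2000*y⌉₊ : ℕ):ℝ) * Real.log 12) := by
        rw [Real.exp_nat_mul, Real.exp_log (by norm_num : (0:ℝ) < 12)]
      have hlog3 : Real.log 12 ≤ 3 := by
        rw [show (3:ℝ) = Real.log (Real.exp 3) by rw [Real.log_exp]]
        exact Real.log_le_log (by norm_num) twelve_le_exp_three
      rw [h6, ← Real.exp_add]
      refine Real.exp_le_exp.mpr ?_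
      have h8 : ((1 + ⌈2000*y⌉₊ : ℕ):ℝ) * Real.log 12 ≤ (2 + 2000*y) * 3 := by
        refine mul_le_mul hc1 hlog3 hlog12.le ?_
        positivity
      linarith
    -- master
    have hmb := master_bound n hn T M hT q hq hsupp hqM α hα τ ξ hball S hS K hK1
    have hts := tail_small y hy0.le (K+1) (by omega) (by exact_mod_cast h2000)
    -- term 2 bound
    have hterm2 : (12:ℝ)^K * (Real.exp y * (y^(K+1) / (K+1)!)) * M
        ≤ Real.sqrt M * Real.sqrt S := by
      have ht1 : (12:ℝ)^K * (Real.exp y * (y^(K+1) / (K+1)!)) ≤ (1/18:ℝ)^(K+1) := by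
        refine le_trans ?_ hts
        refine mul_le_mul_of_nonneg_right ?_ (by positivity)
        refine pow_le_pow_right₀ (by norm_num) (by omega)
      have ht2 : ((1/18:ℝ))^(K+1) ≤ (1/12:ℝ)^m := by
        calc ((1/18:ℝ))^(K+1) ≤ ((1/18:ℝ))^m := by
              refine pow_le_pow_of_le_one (by norm_num) (by norm_num) (by omega)
          _ ≤ (1/12:ℝ)^m := by
              refine pow_le_pow_left₀ (by norm_num) (by norm_num) m
      have ht3 : (1/12:ℝ)^m ≤ Real.exp (-(ℓ/2)) := by
        have h6 : (12:ℝ)^m = Real.exp ((m:ℝ) * Real.log 12) := by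
          rw [Real.exp_nat_mul, Real.exp_log (by norm_num : (0:ℝ) < 12)]
        have h7 : (1/12:ℝ)^m = Real.exp (-((m:ℝ) * Real.log 12)) := by
          rw [one_div, inv_pow, h6, ← Real.exp_neg]
        rw [h7]
        refine Real.exp_le_exp.mpr ?_
        have h8 : ℓ/(2*Real.log 12) ≤ (m:ℝ) := Nat.le_ceil _
        have h9 : ℓ/2 ≤ (m:ℝ) * Real.log 12 := by
          have h10 := mul_le_mul_of_nonneg_right h8 hlog12.le
          calc ℓ/2 = ℓ/(2*Real.log 12) * Real.log 12 := by field_simp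
            _ ≤ (m:ℝ) * Real.log 12 := h10
        linarith
      calc (12:ℝ)^K * (Real.exp y * (y^(K+1)/(K+1)!)) * M
          ≤ Real.exp (-(ℓ/2)) * M :=
            mul_le_mul_of_nonneg_right ((ht1.trans ht2).trans ht3) hM.le
        _ = Real.sqrt M * Real.sqrt S := hexpnegS
    -- term 1 bound
    have hterm1 : (12:ℝ)^K * S ≤ Real.exp 9 * Real.exp (6000*y) * (Real.sqrt M * Real.sqrt S) := by
      have hsplitK : (12:ℝ)^K = (12:ℝ)^(1 + ⌈2000*y⌉₊) * (12:ℝ)^m := by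
        rw [hK_def, pow_add]
      have h129 : (12:ℝ) * Real.exp 6 ≤ Real.exp 9 := by
        calc (12:ℝ) * Real.exp 6 ≤ Real.exp 3 * Real.exp 6 :=
              mul_le_mul_of_nonneg_right twelve_le_exp_three (Real.exp_pos _).le
          _ = Real.exp 9 := by rw [← Real.exp_add]; norm_num
      calc (12:ℝ)^K * S = (12:ℝ)^(1 + ⌈2000*y⌉₊) * ((12:ℝ)^m * S) := by rw [hsplitK]; ring
        _ ≤ (Real.exp 6 * Real.exp (6000*y)) * ((12 * Real.exp (ℓ/2)) * S) := by
            refine mul_le_mul h12c ?_ (by positivity) (by positivity)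
            exact mul_le_mul_of_nonneg_right h12m hS0
        _ = (12 * Real.exp 6) * Real.exp (6000*y) * (Real.exp (ℓ/2) * S) := by ring
        _ ≤ Real.exp 9 * Real.exp (6000*y) * (Real.sqrt M * Real.sqrt S) := by
            rw [hexpS]
            exact mul_le_mul_of_nonneg_right
              (mul_le_mul_of_nonneg_right h129 (Real.exp_pos _).le) (by positivity)
    -- assemble
    rw [← hy_def] at hmb
    calc ‖spaceTimeFourier n q τ ξ‖
        ≤ (12:ℝ)^K * S + (12:ℝ)^K * (Real.exp y * (y^(K+1)/(K+1)!)) * M := hmb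
      _ ≤ Real.exp 9 * Real.exp (6000*y) * (Real.sqrt M * Real.sqrt S)
          + Real.sqrt M * Real.sqrt S := add_le_add hterm1 hterm2
      _ ≤ (Real.exp 9 + 1) * Real.exp (6000*y) * (Real.sqrt M * Real.sqrt S) := by
          nlinarith [mul_nonneg (Real.sqrt_nonneg M) (Real.sqrt_nonneg S),
            Real.one_le_exp (show (0:ℝ) ≤ 6000*y by positivity)]
      _ ≤ Real.exp 10 * (M+1) * Real.exp (384000*T*α) * Real.sqrt S := by
          rw [← hyy]
          have h1 : Real.exp 9 + 1 ≤ Real.exp 10 := by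
            have h2 : (2:ℝ) ≤ Real.exp 1 := by
              have := Real.exp_one_gt_d9
              linarith
            have h3 : (1:ℝ) ≤ Real.exp 9 := Real.one_le_exp (by norm_num)
            calc Real.exp 9 + 1 ≤ 2 * Real.exp 9 := by linarith
              _ ≤ Real.exp 1 * Real.exp 9 :=
                  mul_le_mul_of_nonneg_right h2 (Real.exp_pos _).le
              _ = Real.exp 10 := by rw [← Real.exp_add]; norm_num
          have h2 : Real.sqrt M ≤ M + 1 := sqrt_le_add_one M hM.le
          calc (Real.exp 9 + 1) * Real.exp (6000*y) * (Real.sqrt M * Real.sqrt S)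
              = ((Real.exp 9 + 1) * Real.sqrt M) * Real.exp (6000*y) * Real.sqrt S := by ring
            _ ≤ (Real.exp 10 * (M+1)) * Real.exp (6000*y) * Real.sqrt S := by
                refine mul_le_mul_of_nonneg_right
                  (mul_le_mul_of_nonneg_right ?_ (Real.exp_pos _).le) (Real.sqrt_nonneg _)
                exact mul_le_mul h1 h2 (Real.sqrt_nonneg _) (by positivity)
            _ = Real.exp 10 * (M+1) * Real.exp (6000*y) * Real.sqrt S := by ring

lemma norm_stf_le (n : ℕ) (q : ℝ × EuclideanSpace ℝ (Fin n) → ℂ)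
    (τ : ℝ) (ξ : EuclideanSpace ℝ (Fin n)) :
    ‖spaceTimeFourier n q τ ξ‖ ≤ ∫ p, ‖q p‖ := by
  refine (norm_integral_le_integral_norm _).trans (le_of_eq ?_)
  refine integral_congr_ae (Filter.Eventually.of_forall ?_)
  intro p
  simp only
  rw [norm_mul]
  have harg : -2 * (Real.pi:ℂ) * Complex.I * (((p.1:ℂ) * (τ:ℂ)) + ((inner ℝ p.2 ξ : ℝ) : ℂ))
      = ((-2*Real.pi*(p.1*τ + (inner ℝ p.2 ξ : ℝ)) : ℝ) : ℂ) * Complex.I := by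
    push_cast; ring
  rw [harg, Complex.norm_exp_ofReal_mul_I, mul_one]

theorem analytic_continuation_from_cone
    (n : ℕ) (hn : 1 ≤ n) (T M : ℝ) (hT : 0 < T) (hM : 0 < M) :
    ∃ C > (0 : ℝ), ∃ μ ∈ Set.Ioo (0 : ℝ) 1,
      ∀ q : ℝ × EuclideanSpace ℝ (Fin n) → ℂ,
        Integrable q →
        (∀ p : ℝ × EuclideanSpace ℝ (Fin n),
          ¬ (p.1 ^ 2 + ‖p.2‖ ^ 2 ≤ 2 * T ^ 2) → q p = 0) →
        (∫ p, ‖q p‖) ≤ M →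
        ∀ α : ℝ, 1 ≤ α →
        ∀ (τ : ℝ) (ξ : EuclideanSpace ℝ (Fin n)), τ ^ 2 + ‖ξ‖ ^ 2 ≤ α ^ 2 →
          ‖spaceTimeFourier n q τ ξ‖ ≤
            C * Real.exp (α * (1 - μ)) *
              (⨆ p : {p : ℝ × EuclideanSpace ℝ (Fin n) // |p.1| ≤ ‖p.2‖},
                ‖spaceTimeFourier n q p.1.1 p.1.2‖) ^ μ := by
  set B : ℝ := 384000*T + 1 with hB_def
  have hB1 : (1:ℝ) ≤ B := by rw [hB_def]; nlinarith
  set μ : ℝ := 1/(1+4*B) with hμ_def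
  have hden : (0:ℝ) < 1+4*B := by linarith
  have hμ0 : 0 < μ := by rw [hμ_def]; positivity
  have hμ1 : μ < 1 := by rw [hμ_def, div_lt_one hden]; linarith
  have hμ5 : μ ≤ 1/5 := by
    rw [hμ_def, div_le_div_iff₀ hden (by norm_num : (0:ℝ) < 5)]
    linarith
  refine ⟨Real.exp 10 * (M+1), by positivity, μ, ⟨hμ0, hμ1⟩, ?_⟩
  intro q hq hsupp hqM α hα τ ξ hball
  haveI hne : Nonempty {p : ℝ × EuclideanSpace ℝ (Fin n) // |p.1| ≤ ‖p.2‖} :=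
    ⟨⟨(0, 0), by simp⟩⟩
  set S : ℝ := ⨆ p : {p : ℝ × EuclideanSpace ℝ (Fin n) // |p.1| ≤ ‖p.2‖},
    ‖spaceTimeFourier n q p.1.1 p.1.2‖ with hS_def
  have hup : ∀ p : {p : ℝ × EuclideanSpace ℝ (Fin n) // |p.1| ≤ ‖p.2‖},
      ‖spaceTimeFourier n q p.1.1 p.1.2‖ ≤ M :=
    fun p => (norm_stf_le n q p.1.1 p.1.2).trans hqM
  have hbdd : BddAbove (Set.range fun p : {p : ℝ × EuclideanSpace ℝ (Fin n) // |p.1| ≤ ‖p.2‖} =>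
      ‖spaceTimeFourier n q p.1.1 p.1.2‖) := by
    refine ⟨M, ?_⟩
    rintro x ⟨p, rfl⟩
    exact hup p
  have hS : ∀ σ (η : EuclideanSpace ℝ (Fin n)), |σ| ≤ ‖η‖ → ‖spaceTimeFourier n q σ η‖ ≤ S :=
    fun σ η h => le_ciSup hbdd ⟨(σ, η), h⟩
  have hS0 : 0 ≤ S := le_trans (norm_nonneg _) (hS 0 0 (by simp))
  have hSM : S ≤ M := ciSup_le hup
  have hqM' : ‖spaceTimeFourier n q τ ξ‖ ≤ M := (norm_stf_le n q τ ξ).trans hqM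
  have hα0 : (0:ℝ) < α := lt_of_lt_of_le one_pos hα
  by_cases hcase : Real.exp (-(4*B*α)) ≤ S
  · -- big S : trivial bound
    have h1 : Real.exp (-(4*B*α)) ^ μ ≤ S ^ μ :=
      Real.rpow_le_rpow (Real.exp_pos _).le hcase hμ0.le
    have h2 : Real.exp (-(4*B*α)) ^ μ = Real.exp (-(4*B*α)*μ) := by
      rw [Real.rpow_def_of_pos (Real.exp_pos _), Real.log_exp]
    have h3 : (1:ℝ) ≤ Real.exp (α*(1-μ)) * S^μ := by
      have hzero : α*(1-μ) + -(4*B*α)*μ = α*((1-μ) - 4*B*μ) := by ring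
      have hzero2 : (1-μ) - 4*B*μ = 0 := by
        rw [hμ_def]
        field_simp
        ring
      calc (1:ℝ) = Real.exp (α*(1-μ)) * Real.exp (-(4*B*α)*μ) := by
            rw [← Real.exp_add, hzero, hzero2, mul_zero, Real.exp_zero]
        _ ≤ Real.exp (α*(1-μ)) * S^μ :=
            mul_le_mul_of_nonneg_left (h2 ▸ h1) (Real.exp_pos _).le
    have h4 : M ≤ Real.exp 10 * (M+1) := by
      nlinarith [mul_nonneg (sub_nonneg.mpr (Real.one_le_exp (show (0:ℝ) ≤ 10 by norm_num)))
        (by linarith : (0:ℝ) ≤ M+1)]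
    calc ‖spaceTimeFourier n q τ ξ‖ ≤ M := hqM'
      _ = M * 1 := by ring
      _ ≤ (Real.exp 10 * (M+1)) * (Real.exp (α*(1-μ)) * S^μ) := by
          refine mul_le_mul h4 h3 (by norm_num) (by positivity)
      _ = Real.exp 10 * (M+1) * Real.exp (α*(1-μ)) * S^μ := by ring
  · push_neg at hcase
    have hweak := weak_bound n hn T M hT hM q hq hsupp hqM α hα τ ξ hball S hS hS0 hSM
    have hhalf : Real.sqrt S = S^μ * S^((1:ℝ)/2 - μ) := by
      rw [Real.sqrt_eq_rpow, ← Real.rpow_add' hS0 (by norm_num : μ + ((1:ℝ)/2 - μ) ≠ 0)]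
      congr 1
      ring
    have hSle : S^((1:ℝ)/2 - μ) ≤ Real.exp (-(4*B*α)) ^ ((1:ℝ)/2 - μ) :=
      Real.rpow_le_rpow hS0 hcase.le (by linarith)
    have hexppow : Real.exp (-(4*B*α)) ^ ((1:ℝ)/2 - μ) = Real.exp (-(4*B*α)*((1:ℝ)/2 - μ)) := by
      rw [Real.rpow_def_of_pos (Real.exp_pos _), Real.log_exp]
    have hkey2 : Real.exp (384000*T*α) * Real.exp (-(4*B*α)*((1:ℝ)/2-μ)) ≤
        Real.exp (α*(1-μ)) := by
      rw [← Real.exp_add]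
      refine Real.exp_le_exp.mpr ?_
      have h4 : 384000*T = B - 1 := by rw [hB_def]; ring
      rw [show 384000*T*α = (B-1)*α by rw [h4]]
      have h6 : (B-1) - 4*B*(1/2-μ) ≤ 0 := by nlinarith
      have h7 : (B-1)*α + -(4*B*α)*(1/2-μ) = ((B-1) - 4*B*(1/2-μ))*α := by ring
      have h8 : ((B-1) - 4*B*(1/2-μ))*α ≤ 0 := mul_nonpos_of_nonpos_of_nonneg h6 hα0.le
      have h9 : 0 ≤ α*(1-μ) := mul_nonneg hα0.le (by linarith)
      linarith
    calc ‖spaceTimeFourier n q τ ξ‖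
        ≤ Real.exp 10 * (M+1) * Real.exp (384000*T*α) * Real.sqrt S := hweak
      _ = Real.exp 10 * (M+1) * Real.exp (384000*T*α) * (S^μ * S^((1:ℝ)/2 - μ)) := by
          rw [hhalf]
      _ ≤ Real.exp 10 * (M+1) * Real.exp (384000*T*α) *
          (S^μ * Real.exp (-(4*B*α)*((1:ℝ)/2 - μ))) := by
          rw [← hexppow]
          refine mul_le_mul_of_nonneg_left
            (mul_le_mul_of_nonneg_left hSle (Real.rpow_nonneg hS0 μ)) (by positivity)
      _ = (Real.exp 10 * (M+1)) *
          (Real.exp (384000*T*α) * Real.exp (-(4*B*α)*((1:ℝ)/2-μ))) * S^μ := by ring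
      _ ≤ (Real.exp 10 * (M+1)) * Real.exp (α*(1-μ)) * S^μ := by
          refine mul_le_mul_of_nonneg_right
            (mul_le_mul_of_nonneg_left hkey2 (by positivity)) (Real.rpow_nonneg hS0 μ)
end
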